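/- arXiv:1401.7514 — 2 statements merged into one kernel-verified Lean document; each statement's English description precedes it below -/
import Mathlib

section
/- Let S be a starlike tree with branching vertex v of degree k > 2 and branch lengths r_1,…,r_k. If the average branch length (r_1 + ⋯ + r_k)/k is at least 8, then GA(S) > ABC(S). -/
open SimpleGraph

section Aux
open Finset

lemma sqrt_half_mul : Real.sqrt (1/2) * Real.sqrt 2 = 1 := by
  rw [← Real.sqrt_mul (by norm_num)]; norm_num

lemma edge_bound (a b : ℕ) (ha1 : 1 ≤ a) (ha2 : a ≤ 2) (hb1 : 1 ≤ b) (hb2 : b ≤ 2) :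
    Real.sqrt 2 / 6 + Real.sqrt (((a:ℝ) + b - 2)/((a:ℝ)*b))
      ≤ 2 * Real.sqrt ((a:ℝ)*b) / ((a:ℝ)+b) := by
  have hs0 : (0:ℝ) ≤ Real.sqrt 2 := Real.sqrt_nonneg 2
  have hs2 : Real.sqrt 2 ^ 2 = 2 := Real.sq_sqrt (by norm_num)
  have ht0 : (0:ℝ) ≤ Real.sqrt (1/2) := Real.sqrt_nonneg _
  have ht := sqrt_half_mul
  interval_cases a <;> interval_cases b
  · norm_num [Real.sqrt_one]; nlinarith
  · push_cast
    rw [show ((1:ℝ)+2-2)/(1*2) = 1/2 by norm_num, show ((1:ℝ)*2) = 2 by norm_num]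
    nlinarith
  · push_cast
    rw [show ((2:ℝ)+1-2)/(2*1) = 1/2 by norm_num, show ((2:ℝ)*1) = 2 by norm_num]
    nlinarith
  · push_cast
    rw [show ((2:ℝ)+2-2)/(2*2) = 1/2 by norm_num,
      show ((2:ℝ)*2) = 4 by norm_num, show Real.sqrt 4 = 2 by
        rw [show (4:ℝ) = 2^2 by norm_num, Real.sqrt_sq (by norm_num)]]
    nlinarith

lemma abc_lt_one (a b : ℕ) (ha : 1 ≤ a) (hb : 1 ≤ b) :
    Real.sqrt (((a:ℝ) + b - 2)/((a:ℝ)*b)) < 1 := by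
  rw [Real.sqrt_lt' one_pos]
  have ha' : (1:ℝ) ≤ a := by exact_mod_cast ha
  have hb' : (1:ℝ) ≤ b := by exact_mod_cast hb
  rw [div_lt_iff₀ (by nlinarith)]
  nlinarith

lemma ga_nonneg (a b : ℕ) :
    (0:ℝ) ≤ 2 * Real.sqrt ((a:ℝ)*b) / ((a:ℝ)+b) := by
  apply div_nonneg (by positivity) (by positivity)

theorem key {V : Type*} [Fintype V] [DecidableEq V] (S : SimpleGraph V)
    [DecidableRel S.Adj]
    (hS : S.IsTree) (v : V) (hv : 2 < S.degree v)
    (huniq : ∀ u : V, 2 < S.degree u → u = v)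
    (havg : (8 : ℝ) ≤ ((Fintype.card V : ℝ) - 1) / (S.degree v : ℝ)) :
    (∑ e ∈ S.edgeFinset,
      Sym2.lift ⟨fun u v =>
        Real.sqrt (((S.degree u : ℝ) + (S.degree v : ℝ) - 2) /
          ((S.degree u : ℝ) * (S.degree v : ℝ))),
        fun u v => by
          dsimp only; rw [mul_comm ((S.degree u : ℝ)), add_comm ((S.degree u : ℝ))]⟩ e)
    < ∑ e ∈ S.edgeFinset,
      Sym2.lift ⟨fun u v =>
        2 * Real.sqrt ((S.degree u : ℝ) * (S.degree v : ℝ)) /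
          ((S.degree u : ℝ) + (S.degree v : ℝ)),
        fun u v => by
          dsimp only; rw [mul_comm ((S.degree u : ℝ)), add_comm ((S.degree u : ℝ))]⟩ e := by
  set abcT : Sym2 V → ℝ := fun e => Sym2.lift ⟨fun u v =>
        Real.sqrt (((S.degree u : ℝ) + (S.degree v : ℝ) - 2) /
          ((S.degree u : ℝ) * (S.degree v : ℝ))),
        fun u v => by
          dsimp only; rw [mul_comm ((S.degree u : ℝ)), add_comm ((S.degree u : ℝ))]⟩ e
    with habcT
  set gaT : Sym2 V → ℝ := fun e => Sym2.lift ⟨fun u v =>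
        2 * Real.sqrt ((S.degree u : ℝ) * (S.degree v : ℝ)) /
          ((S.degree u : ℝ) + (S.degree v : ℝ)),
        fun u v => by
          dsimp only; rw [mul_comm ((S.degree u : ℝ)), add_comm ((S.degree u : ℝ))]⟩ e
    with hgaT
  -- every vertex has positive degree
  have hpos : ∀ u : V, 0 < S.degree u := by
    intro u
    rw [S.degree_pos_iff_exists_adj]
    by_cases h : u = v
    · subst h
      exact S.degree_pos_iff_exists_adj u |>.mp (by omega)
    · obtain ⟨p⟩ := hS.isConnected.preconnected u v
      cases p with
      | nil => exact absurd rfl h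
      | cons hadj _ => exact ⟨_, hadj⟩
  have hle2 : ∀ u : V, u ≠ v → S.degree u ≤ 2 := by
    intro u h
    by_contra h'
    exact h (huniq u (by omega))
  set k := S.degree v with hk
  set I := S.incidenceFinset v with hI
  set m := S.edgeFinset.card with hmdef
  have hIsub : I ⊆ S.edgeFinset := by
    intro e he
    rw [hI, mem_incidenceFinset] at he
    exact mem_edgeFinset.2 he.1
  have hIcard : I.card = k := S.card_incidenceFinset_eq_degree v
  have hm : m + 1 = Fintype.card V := hS.card_edgeFinset
  -- m ≥ 8k
  have hk0 : (0:ℝ) < (k:ℝ) := by exact_mod_cast (by omega : 0 < k)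
  have hmk : (8:ℝ) * k ≤ (m:ℝ) := by
    have : (Fintype.card V : ℝ) - 1 = (m:ℝ) := by
      rw [← hm]; push_cast; ring
    rw [this] at havg
    rw [le_div_iff₀ hk0] at havg
    linarith
  have hmkN : 8 * k ≤ m := by exact_mod_cast hmk
  have hkle : k ≤ m := by omega
  -- per-edge bounds
  have hnoncenter : ∀ e ∈ S.edgeFinset \ I,
      Real.sqrt 2 / 6 ≤ gaT e - abcT e := by
    intro e he
    induction e using Sym2.ind with
    | _ u w =>
      rw [Finset.mem_sdiff, mem_edgeFinset, hI, mem_incidenceFinset] at he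
      obtain ⟨hadj, hnin⟩ := he
      have hvmem : v ∉ (s(u, w) : Sym2 V) := fun hmem => hnin ⟨hadj, hmem⟩
      rw [Sym2.mem_iff] at hvmem
      push_neg at hvmem
      have hu2 : S.degree u ≤ 2 := hle2 u (fun h => hvmem.1 h.symm)
      have hw2 : S.degree w ≤ 2 := hle2 w (fun h => hvmem.2 h.symm)
      rw [hgaT, habcT]
      simp only [Sym2.lift_mk]
      have := edge_bound (S.degree u) (S.degree w) (hpos u) hu2 (hpos w) hw2
      linarith
  have hcenter : ∀ e ∈ I, (-1 : ℝ) < gaT e - abcT e := by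
    intro e he
    induction e using Sym2.ind with
    | _ u w =>
      rw [hgaT, habcT]
      simp only [Sym2.lift_mk]
      have h1 := abc_lt_one (S.degree u) (S.degree w) (hpos u) (hpos w)
      have h2 := ga_nonneg (S.degree u) (S.degree w)
      linarith
  -- summing
  have hsum1 : ((m - k : ℕ) : ℝ) * (Real.sqrt 2 / 6)
      ≤ ∑ e ∈ S.edgeFinset \ I, (gaT e - abcT e) := by
    have := Finset.card_nsmul_le_sum (S.edgeFinset \ I) (fun e => gaT e - abcT e)
      (Real.sqrt 2 / 6) hnoncenter
    rwa [Finset.card_sdiff_of_subset hIsub, hIcard, nsmul_eq_mul] at this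
  have hsum2 : -(k:ℝ) < ∑ e ∈ I, (gaT e - abcT e) := by
    have hne : I.Nonempty := Finset.card_pos.1 (by omega)
    have := Finset.sum_lt_sum_of_nonempty hne hcenter
    calc -(k:ℝ) = ∑ _e ∈ I, (-1:ℝ) := by
          rw [Finset.sum_const, hIcard, nsmul_eq_mul]; ring
      _ < _ := this
  have hsplit : ∑ e ∈ S.edgeFinset, (gaT e - abcT e)
      = ∑ e ∈ S.edgeFinset \ I, (gaT e - abcT e) + ∑ e ∈ I, (gaT e - abcT e) :=
    (Finset.sum_sdiff hIsub).symm
  have hfinal : (0:ℝ) < ∑ e ∈ S.edgeFinset, (gaT e - abcT e) := by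
    rw [hsplit]
    have hs1 : (1:ℝ) ≤ Real.sqrt 2 := by
      rw [show (1:ℝ) = Real.sqrt 1 by rw [Real.sqrt_one]]
      exact Real.sqrt_le_sqrt (by norm_num)
    have hcast : ((m - k : ℕ) : ℝ) = (m:ℝ) - (k:ℝ) := by
      rw [Nat.cast_sub hkle]
    nlinarith [hsum1, hsum2]
  have := Finset.sum_sub_distrib (s := S.edgeFinset) (f := gaT) (g := abcT)
  rw [this] at hfinal
  linarith

end Aux

/-- The first geometric-arithmetic index of a finite simple graph:
`GA(G) = Σ_{uv ∈ E(G)} 2√(dᵤ dᵥ)/(dᵤ + dᵥ)`. -/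
noncomputable def GA {V : Type*} [Finite V] (G : SimpleGraph V) : ℝ := by
  classical
  have : Fintype V := Fintype.ofFinite V
  exact ∑ e ∈ G.edgeFinset,
    Sym2.lift ⟨fun u v =>
      2 * Real.sqrt ((G.degree u : ℝ) * (G.degree v : ℝ)) /
        ((G.degree u : ℝ) + (G.degree v : ℝ)),
      fun u v => by
        dsimp only; rw [mul_comm ((G.degree u : ℝ)), add_comm ((G.degree u : ℝ))]⟩ e

/-- The atom-bond connectivity index of a finite simple graph:
`ABC(G) = Σ_{uv ∈ E(G)} √((dᵤ + dᵥ - 2)/(dᵤ dᵥ))`. -/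
noncomputable def ABC {V : Type*} [Finite V] (G : SimpleGraph V) : ℝ := by
  classical
  have : Fintype V := Fintype.ofFinite V
  exact ∑ e ∈ G.edgeFinset,
    Sym2.lift ⟨fun u v =>
      Real.sqrt (((G.degree u : ℝ) + (G.degree v : ℝ) - 2) /
        ((G.degree u : ℝ) * (G.degree v : ℝ))),
      fun u v => by
        dsimp only; rw [mul_comm ((G.degree u : ℝ)), add_comm ((G.degree u : ℝ))]⟩ e

/-- The degree of a vertex (classical wrapper around `SimpleGraph.degree`). -/
noncomputable def deg {V : Type*} [Finite V] (G : SimpleGraph V) (v : V) : ℕ := by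
  classical
  have : Fintype V := Fintype.ofFinite V
  exact G.degree v

/-- The maximum degree `Δ` of a finite simple graph. -/
noncomputable def maxDeg {V : Type*} [Finite V] (G : SimpleGraph V) : ℕ := by
  classical
  have : Fintype V := Fintype.ofFinite V
  exact G.maxDegree

/-- The minimum degree `δ` of a finite simple graph. -/
noncomputable def minDeg {V : Type*} [Finite V] (G : SimpleGraph V) : ℕ := by
  classical
  have : Fintype V := Fintype.ofFinite V
  exact G.minDegree

/-- Let `S` be a starlike tree with branching vertex `v` of degree `k > 2`.
If the average branch length `(r₁ + ⋯ + r_k)/k = (|V(S)| − 1)/k` is at least `8`, then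
`GA(S) > ABC(S)`. -/
theorem stmt_13 {V : Type*} [Fintype V] (S : SimpleGraph V)
    (hS : S.IsTree) (v : V) (hv : 2 < deg S v)
    (huniq : ∀ u : V, 2 < deg S u → u = v)
    (havg : (8 : ℝ) ≤ ((Fintype.card V : ℝ) - 1) / (deg S v : ℝ)) :
    ABC S < GA S := by
  classical
  unfold GA ABC
  unfold deg at hv huniq havg
  rw [Subsingleton.elim (Fintype.ofFinite V) ‹Fintype V›] at hv huniq havg ⊢
  exact key S hS v hv huniq havg
end

section
/- For the wheel graph W_n, GA(W_n) > ABC(W_n) for every integer n with 4 ≤ n ≤ 194; explicitly, 1 + 2√(3(n−1))/(n+2) > 2/3 + √(n/(3(n−1))) for 4 ≤ n ≤ 194. -/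
open SimpleGraph

/-- The wheel graph on `m + 1` vertices: a hub vertex `none` joined to every vertex of the
cycle `C_m` on the rim vertices `some a`, `a : Fin m`. For `n ≥ 4`, the wheel `W_n` on `n`
vertices is `wheelGraph (n - 1)`. -/
def wheelGraph (m : ℕ) : SimpleGraph (Option (Fin m)) :=
  SimpleGraph.fromRel (fun u v =>
    u = none ∨ ∃ a b : Fin m, u = some a ∧ v = some b ∧ (cycleGraph m).Adj a b)


section Aux

open Finset

lemma wheel_adj_none_some {m : ℕ} (a : Fin m) : (wheelGraph m).Adj none (some a) := by
  simp [wheelGraph]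

lemma wheel_adj_some_some {m : ℕ} {a b : Fin m} :
    (wheelGraph m).Adj (some a) (some b) ↔ (cycleGraph m).Adj a b := by
  simp only [wheelGraph, fromRel_adj]
  constructor
  · rintro ⟨hne, (h | ⟨a', b', ha, hb, hadj⟩) | (h | ⟨a', b', ha, hb, hadj⟩)⟩
    · exact absurd h (by simp)
    · cases ha; cases hb; exact hadj
    · exact absurd h (by simp)
    · cases ha; cases hb; exact hadj.symm
  · intro h
    exact ⟨by simpa using h.ne, Or.inl (Or.inr ⟨a, b, rfl, rfl, h⟩)⟩

lemma wheel_degree_none {m : ℕ} [Fintype ((wheelGraph m).neighborSet none)] :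
    (wheelGraph m).degree none = m := by
  have h : (wheelGraph m).neighborFinset none = Finset.univ.erase none := by
    ext w
    cases w with
    | none => simp [mem_neighborFinset]
    | some b => simp [mem_neighborFinset, wheel_adj_none_some]
  rw [SimpleGraph.degree, h, Finset.card_erase_of_mem (Finset.mem_univ _), Finset.card_univ]
  simp

open Fin.CommRing in
lemma fin_sub_one_ne_add_one {k : ℕ} (a : Fin (k + 3)) : a - 1 ≠ a + 1 := by
  intro h
  have h2 : (2 : Fin (k + 3)) = 0 := by
    have : (a + 1) - (a - 1) = (0 : Fin (k + 3)) := by rw [← h]; ring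
    rw [show (a + 1) - (a - 1) = (2 : Fin (k + 3)) from by ring] at this
    exact this
  have h3 := congrArg Fin.val h2
  simp at h3
  rw [Nat.mod_eq_of_lt (by omega)] at h3
  omega

open Fin.CommRing in
lemma wheel_degree_some {m : ℕ} (hm : 3 ≤ m) (a : Fin m)
    [Fintype ((wheelGraph m).neighborSet (some a))] :
    (wheelGraph m).degree (some a) = 3 := by
  obtain ⟨k, rfl⟩ : ∃ k, m = k + 3 := ⟨m - 3, by omega⟩
  have hcyc : ∀ b : Fin (k + 3), (cycleGraph (k + 3)).Adj a b ↔ b = a - 1 ∨ b = a + 1 := by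
    intro b
    rw [show (cycleGraph (k+3)).Adj a b ↔ a - b = 1 ∨ b - a = 1 from cycleGraph_adj (n := k+1)]
    constructor
    · rintro (h | h)
      · left; rw [← h]; ring
      · right; rw [← h]; ring
    · rintro (h | h)
      · left; rw [h]; ring
      · right; rw [h]; ring
  have h : (wheelGraph (k+3)).neighborFinset (some a) = {none, some (a - 1), some (a + 1)} := by
    ext w
    cases w with
    | none =>
      simp only [mem_neighborFinset]
      simpa using ((wheel_adj_none_some a).symm : (wheelGraph (k+3)).Adj (some a) none)
    | some b =>
      simp [mem_neighborFinset, wheel_adj_some_some, hcyc b]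
  rw [SimpleGraph.degree, h]
  rw [Finset.card_insert_of_notMem (by simp), Finset.card_insert_of_notMem (by
    simp [fin_sub_one_ne_add_one a]), Finset.card_singleton]

lemma edgeFinset_congr {V : Type*} (G : SimpleGraph V) (i1 i2 : Fintype G.edgeSet) :
    @SimpleGraph.edgeFinset V G i1 = @SimpleGraph.edgeFinset V G i2 :=
  congrArg (fun i => @SimpleGraph.edgeFinset V G i) (Subsingleton.elim i1 i2)

lemma wheel_card_edgeFinset {m : ℕ} (hm : 3 ≤ m) [iE : Fintype ((wheelGraph m).edgeSet)] :
    #((wheelGraph m).edgeFinset) = 2 * m := by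
  classical
  have h := SimpleGraph.sum_degrees_eq_twice_card_edges (wheelGraph m)
  rw [Fintype.sum_option] at h
  rw [wheel_degree_none] at h
  rw [Finset.sum_congr rfl (fun a _ => wheel_degree_some hm a)] at h
  simp only [Finset.sum_const, Finset.card_univ, Fintype.card_fin, smul_eq_mul] at h
  rw [edgeFinset_congr (wheelGraph m) _ iE] at h
  omega

lemma wheel_sum_eval {m : ℕ} (hm : 3 ≤ m) [iE : Fintype ((wheelGraph m).edgeSet)]
    (F : Sym2 (Option (Fin m)) → ℝ) (c₁ c₂ : ℝ)
    (h1 : ∀ a : Fin m, F s(none, some a) = c₁)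
    (h2 : ∀ a b : Fin m, (wheelGraph m).Adj (some a) (some b) → F s(some a, some b) = c₂) :
    ∑ e ∈ (wheelGraph m).edgeFinset, F e = m * c₁ + m * c₂ := by
  classical
  have key : ∀ e ∈ (wheelGraph m).edgeFinset, F e = if none ∈ e then c₁ else c₂ := by
    intro e he
    induction e using Sym2.ind with
    | _ u v =>
      have hadj : (wheelGraph m).Adj u v := by
        rwa [SimpleGraph.mem_edgeFinset, SimpleGraph.mem_edgeSet] at he
      match u, v with
      | none, none => exact absurd hadj (wheelGraph m).irrefl
      | none, some a => simp [h1 a]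
      | some a, none =>
        rw [Sym2.eq_swap]
        simp [h1 a]
      | some a, some b =>
        have hmem : ¬ (none ∈ s(some a, some b)) := by simp
        simp only [hmem, if_false]
        exact h2 a b hadj
  rw [Finset.sum_congr rfl key, Finset.sum_ite]
  have hfil : (wheelGraph m).edgeFinset.filter (fun e => none ∈ e)
      = (wheelGraph m).incidenceFinset none := by
    ext e
    simp only [Finset.mem_filter, SimpleGraph.mem_incidenceFinset, SimpleGraph.mem_edgeFinset,
      SimpleGraph.incidenceSet, Set.mem_setOf_eq, Set.mem_sep_iff, SimpleGraph.mem_edgeSet]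
  have h3 : #((wheelGraph m).edgeFinset.filter (fun e => none ∈ e)) = m := by
    rw [hfil, SimpleGraph.card_incidenceFinset_eq_degree, wheel_degree_none]
  have h4 : #((wheelGraph m).edgeFinset.filter (fun e => ¬ none ∈ e)) = m := by
    have h5 := Finset.card_filter_add_card_filter_not
      (s := (wheelGraph m).edgeFinset) (p := fun e => none ∈ e)
    have h6 := wheel_card_edgeFinset hm (m := m)
    omega
  rw [Finset.sum_const, Finset.sum_const, h3, h4, nsmul_eq_mul, nsmul_eq_mul]

lemma GA_wheel {m : ℕ} (hm : 3 ≤ m) :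
    GA (wheelGraph m) = m * (2 * Real.sqrt (3 * (m : ℝ)) / ((m : ℝ) + 3)) + m * 1 := by
  classical
  unfold GA
  dsimp only
  beta_reduce
  rw [edgeFinset_congr (wheelGraph m) _ (by infer_instance)]
  apply wheel_sum_eval hm
  · intro a
    rw [Sym2.lift_mk]; dsimp only; simp only [wheel_degree_none, wheel_degree_some hm]
    rw [mul_comm ((m : ℝ)) _, add_comm ((m:ℝ)) _]
    norm_num
    ring_nf
  · intro a b _
    rw [Sym2.lift_mk]; dsimp only; simp only [wheel_degree_some hm]
    rw [show (((3:ℕ):ℝ) * ((3:ℕ):ℝ)) = 3 ^ 2 by norm_num, Real.sqrt_sq (by norm_num)]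
    norm_num

lemma ABC_wheel {m : ℕ} (hm : 3 ≤ m) :
    ABC (wheelGraph m) = m * Real.sqrt (((m : ℝ) + 1) / (3 * (m : ℝ))) + m * (2/3) := by
  classical
  unfold ABC
  dsimp only
  beta_reduce
  rw [edgeFinset_congr (wheelGraph m) _ (by infer_instance)]
  apply wheel_sum_eval hm
  · intro a
    rw [Sym2.lift_mk]; dsimp only; simp only [wheel_degree_none, wheel_degree_some hm]
    rw [show (((m:ℕ):ℝ) + ((3:ℕ):ℝ) - 2) = (m:ℝ) + 1 by push_cast; ring,
      show (((m:ℕ):ℝ) * ((3:ℕ):ℝ)) = 3 * (m:ℝ) by push_cast; ring]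
  · intro a b _
    rw [Sym2.lift_mk]; dsimp only; simp only [wheel_degree_some hm]
    rw [show ((((3:ℕ):ℝ) + ((3:ℕ):ℝ) - 2) / (((3:ℕ):ℝ) * ((3:ℕ):ℝ))) = (2/3)^2 by norm_num,
      Real.sqrt_sq (by norm_num)]

lemma wheel_poly (x : ℝ) (h4 : 4 ≤ x) (h194 : x ≤ 194)
    (hE : 0 ≤ (2*x+1)*(x+2)^2 - 108*(x-1)^2) :
    ((2*x+1)*(x+2)^2 - 108*(x-1)^2)^2 < 432*(x-1)^3*(x+2)^2 := by
  nlinarith [mul_nonneg hE (sub_nonneg.2 h194), mul_nonneg (mul_nonneg hE hE) (sub_nonneg.2 h194),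
    sq_nonneg (x-194), sq_nonneg (x-4), mul_nonneg (sub_nonneg.2 h4) (sub_nonneg.2 h194),
    mul_nonneg (mul_nonneg (sub_nonneg.2 h4) (sub_nonneg.2 h194)) hE]

lemma wheel_analytic (x : ℝ) (h4 : 4 ≤ x) (h194 : x ≤ 194) :
    (2 : ℝ)/3 + Real.sqrt (x / (3 * (x - 1))) < 1 + 2 * Real.sqrt (3 * (x - 1)) / (x + 2) := by
  have hx1 : (0:ℝ) < x - 1 := by linarith
  have hx2 : (0:ℝ) < x + 2 := by linarith
  set A := Real.sqrt (3 * (x - 1)) with hA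
  have hA0 : 0 < A := Real.sqrt_pos.2 (by linarith)
  have hA2 : A ^ 2 = 3 * (x - 1) := Real.sq_sqrt (by linarith)
  have key : 3 * x * (x + 2)^2 < (x - 1) * ((x + 2) + 6 * A)^2 := by
    rcases le_or_gt ((2*x+1)*(x+2)^2 - 108*(x-1)^2) 0 with hE | hE
    · nlinarith [mul_pos (mul_pos hA0 hx1) hx2]
    · have h := wheel_poly x h4 h194 (le_of_lt hE)
      have hK : 0 < 12 * A * (x - 1) * (x + 2) := by positivity
      have hsq : ((2*x+1)*(x+2)^2 - 108*(x-1)^2)^2 < (12 * A * (x - 1) * (x + 2))^2 := by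
        calc ((2*x+1)*(x+2)^2 - 108*(x-1)^2)^2 < 432*(x-1)^3*(x+2)^2 := h
        _ = (12 * A * (x - 1) * (x + 2))^2 := by rw [mul_pow, mul_pow, mul_pow]; rw [hA2]; ring
      have hlt : (2*x+1)*(x+2)^2 - 108*(x-1)^2 < 12 * A * (x - 1) * (x + 2) :=
        lt_of_pow_lt_pow_left₀ 2 (le_of_lt hK) hsq
      nlinarith [hlt, hA2]
  have hB : Real.sqrt (x / (3 * (x - 1))) < 1/3 + 2 * A / (x + 2) := by
    have hy : (0:ℝ) < 1/3 + 2 * A / (x + 2) := by positivity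
    rw [show (1:ℝ)/3 + 2 * A / (x + 2) = ((x + 2) + 6 * A) / (3 * (x + 2)) by
      field_simp; ring] at hy ⊢
    rw [Real.sqrt_lt' hy, div_pow, div_lt_div_iff₀ (by positivity) (by positivity)]
    calc x * (3 * (x + 2))^2 = 3 * x * (x+2)^2 * 3 := by ring
    _ < (x - 1) * ((x + 2) + 6 * A)^2 * 3 := by linarith
    _ = ((x + 2) + 6 * A)^2 * (3 * (x - 1)) := by ring
  linarith

end Aux

/-- For every integer `4 ≤ n ≤ 194`, the wheel graph `W_n` satisfies
`GA(W_n) > ABC(W_n)`; explicitly, `1 + 2√(3(n−1))/(n+2) > 2/3 + √(n/(3(n−1)))`. -/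
theorem stmt_16 (n : ℕ) (hn : 4 ≤ n) (hn' : n ≤ 194) :
    ABC (wheelGraph (n - 1)) < GA (wheelGraph (n - 1)) ∧
    (2 : ℝ)/3 + Real.sqrt ((n : ℝ) / (3 * ((n : ℝ) - 1))) <
      1 + 2 * Real.sqrt (3 * ((n : ℝ) - 1)) / ((n : ℝ) + 2) := by
  have hx4 : (4:ℝ) ≤ (n:ℝ) := by exact_mod_cast hn
  have hx194 : (n:ℝ) ≤ 194 := by exact_mod_cast hn'
  have hana := wheel_analytic (n:ℝ) hx4 hx194
  refine ⟨?_, hana⟩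
  have hm : 3 ≤ n - 1 := by omega
  set m := n - 1 with hmdef
  have hmn : (m:ℝ) = (n:ℝ) - 1 := by
    rw [hmdef]
    push_cast [Nat.cast_sub (by omega : 1 ≤ n)]
    ring
  have hncast : (n:ℝ) = (m:ℝ) + 1 := by linarith
  rw [ABC_wheel hm, GA_wheel hm]
  rw [hncast] at hana
  rw [show (m:ℝ) + 1 - 1 = (m:ℝ) by ring, show (m:ℝ) + 1 + 2 = (m:ℝ) + 3 by ring] at hana
  have hm0 : (0:ℝ) < (m:ℝ) := by
    have : (3:ℝ) ≤ (m:ℝ) := by exact_mod_cast hm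
    linarith
  nlinarith [mul_lt_mul_of_pos_left hana hm0]
end
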